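/- Let G(y) = √(1 + y²) − 1. Then for every y ∈ ℝ one has G'(y)² − 2G(y)G''(y) = (√(1+y²) − 1)²·(√(1+y²) + 2)/(1+y²)^{3/2}; in particular G'(y)² − 2G(y)G''(y) ≥ 0 for all y ∈ ℝ, with equality if and only if y = 0. Consequently, for F(x) = x²/2 and this G, the function M(x,y) = (6F(x)F''(x)² − 3F'(x)²F''(x) − 2F(x)F'(x)F'''(x))·G(y)G'(y)² + F(x)F'(x)²F''(x)·(G'(y)² − 2G(y)G''(y)) satisfies M(x,y) = (x⁴/2)·(G'(y)² − 2G(y)G''(y)) ≥ 0 for all (x,y) ∈ ℝ². -/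

import Mathlib

/-- `G(y) = √(1 + y²) − 1`, the normalized relativistic kinetic energy. -/
noncomputable def Grel : ℝ → ℝ := fun y => Real.sqrt (1 + y ^ 2) - 1

/-- `F(x) = x²/2`. -/
noncomputable def Frel : ℝ → ℝ := fun x => x ^ 2 / 2

/-- The function `M(x,y)` built from `F` and `G`. -/
noncomputable def Mfun (F G : ℝ → ℝ) (x y : ℝ) : ℝ :=
  (6 * F x * (deriv (deriv F) x) ^ 2 - 3 * (deriv F x) ^ 2 * deriv (deriv F) x
      - 2 * F x * deriv F x * deriv (deriv (deriv F)) x) * G y * (deriv G y) ^ 2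
    + F x * (deriv F x) ^ 2 * deriv (deriv F) x
      * ((deriv G y) ^ 2 - 2 * G y * deriv (deriv G) y)

lemma aux_pos (y : ℝ) : (0:ℝ) < 1 + y ^ 2 := by positivity

lemma s_pos (y : ℝ) : 0 < Real.sqrt (1 + y ^ 2) := Real.sqrt_pos.mpr (aux_pos y)

lemma s_sq (y : ℝ) : Real.sqrt (1 + y ^ 2) ^ 2 = 1 + y ^ 2 :=
  Real.sq_sqrt (aux_pos y).le

lemma hasDerivAt_s (y : ℝ) :
    HasDerivAt (fun y : ℝ => Real.sqrt (1 + y ^ 2)) (y / Real.sqrt (1 + y ^ 2)) y := by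
  have h1 : HasDerivAt (fun y : ℝ => 1 + y ^ 2) (2 * y) y := by
    simpa using ((hasDerivAt_pow 2 y).const_add 1)
  have h2 := (Real.hasDerivAt_sqrt (ne_of_gt (aux_pos y))).comp y h1
  refine h2.congr_deriv ?_
  ring

lemma derivG (y : ℝ) : deriv Grel y = y / Real.sqrt (1 + y ^ 2) := by
  have : HasDerivAt Grel (y / Real.sqrt (1 + y ^ 2)) y := (hasDerivAt_s y).sub_const 1
  exact this.deriv

lemma derivG' : deriv Grel = fun y => y / Real.sqrt (1 + y ^ 2) := funext derivG

lemma deriv2G (y : ℝ) :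
    deriv (deriv Grel) y = 1 / ((1 + y ^ 2) * Real.sqrt (1 + y ^ 2)) := by
  rw [derivG']
  have hs := s_pos y
  have h : HasDerivAt (fun y : ℝ => y / Real.sqrt (1 + y ^ 2))
      ((1 * Real.sqrt (1 + y ^ 2) - y * (y / Real.sqrt (1 + y ^ 2))) /
        (Real.sqrt (1 + y ^ 2)) ^ 2) y :=
    (hasDerivAt_id y).div (hasDerivAt_s y) (ne_of_gt hs)
  rw [h.deriv]
  have h2 := s_sq y
  field_simp
  nlinarith [s_sq y]

lemma rpow_three_halves (y : ℝ) :
    (1 + y ^ 2) ^ ((3 : ℝ) / 2) = Real.sqrt (1 + y ^ 2) ^ 3 := by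
  rw [Real.sqrt_eq_rpow, ← Real.rpow_natCast ((1 + y ^ 2) ^ ((1:ℝ)/2)) 3,
    ← Real.rpow_mul (aux_pos y).le]
  norm_num

lemma keyG (y : ℝ) :
    (deriv Grel y) ^ 2 - 2 * Grel y * deriv (deriv Grel) y =
      (Real.sqrt (1 + y ^ 2) - 1) ^ 2 * (Real.sqrt (1 + y ^ 2) + 2)
        / (1 + y ^ 2) ^ ((3 : ℝ) / 2) := by
  rw [derivG, deriv2G, rpow_three_halves, Grel]
  have hs := s_pos y
  set s := Real.sqrt (1 + y ^ 2) with hsdef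
  have h2 : s ^ 2 = 1 + y ^ 2 := s_sq y
  have hy : y ^ 2 = s ^ 2 - 1 := by linarith
  rw [show (1 + y ^ 2) = s ^ 2 by linarith]
  field_simp
  linear_combination s * hy

theorem stmt13 :
    (∀ y : ℝ,
      (deriv Grel y) ^ 2 - 2 * Grel y * deriv (deriv Grel) y =
        (Real.sqrt (1 + y ^ 2) - 1) ^ 2 * (Real.sqrt (1 + y ^ 2) + 2)
          / (1 + y ^ 2) ^ ((3 : ℝ) / 2)) ∧
    (∀ y : ℝ, 0 ≤ (deriv Grel y) ^ 2 - 2 * Grel y * deriv (deriv Grel) y) ∧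
    (∀ y : ℝ, (deriv Grel y) ^ 2 - 2 * Grel y * deriv (deriv Grel) y = 0 ↔ y = 0) ∧
    (∀ x y : ℝ,
      Mfun Frel Grel x y = x ^ 4 / 2 * ((deriv Grel y) ^ 2 - 2 * Grel y * deriv (deriv Grel) y)
        ∧ 0 ≤ Mfun Frel Grel x y) := by
  have hs1 : ∀ y : ℝ, 1 ≤ Real.sqrt (1 + y ^ 2) := by
    intro y
    have := Real.sqrt_le_sqrt (show (1:ℝ) ≤ 1 + y ^ 2 by nlinarith)
    simpa using this
  have hnonneg : ∀ y : ℝ, 0 ≤ (deriv Grel y) ^ 2 - 2 * Grel y * deriv (deriv Grel) y := by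
    intro y
    rw [keyG y]
    have h1 := hs1 y
    have h2 : (0:ℝ) < (1 + y ^ 2) ^ ((3 : ℝ) / 2) := Real.rpow_pos_of_pos (aux_pos y) _
    have h3 : (0:ℝ) ≤ (Real.sqrt (1 + y ^ 2) - 1) ^ 2 * (Real.sqrt (1 + y ^ 2) + 2) := by
      positivity
    positivity
  refine ⟨keyG, hnonneg, ?_, ?_⟩
  · intro y
    rw [keyG y]
    have h1 := hs1 y
    have h2 : (0:ℝ) < (1 + y ^ 2) ^ ((3 : ℝ) / 2) := Real.rpow_pos_of_pos (aux_pos y) _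
    constructor
    · intro h
      have h3 : (Real.sqrt (1 + y ^ 2) - 1) ^ 2 * (Real.sqrt (1 + y ^ 2) + 2) = 0 := by
        field_simp at h
        rwa [mul_zero] at h
      have h4 : Real.sqrt (1 + y ^ 2) = 1 := by nlinarith
      have h5 : (1:ℝ) + y ^ 2 = 1 := by
        have := s_sq y
        rw [h4] at this
        linarith
      nlinarith
    · intro h
      subst h
      simp
  · -- Mfun part
    have dF : deriv Frel = fun x => x := by
      funext x
      have h : HasDerivAt Frel x x := by
        have := (hasDerivAt_pow 2 x).div_const 2
        exact (by simpa using this : HasDerivAt (fun x : ℝ => x ^ 2 / 2) x x)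
      exact h.deriv
    have dF2 : deriv (deriv Frel) = fun _ => (1:ℝ) := by
      rw [dF]
      funext x
      simp
    have dF3 : deriv (deriv (deriv Frel)) = fun _ => (0:ℝ) := by
      rw [dF2]
      funext x
      simp
    intro x y
    have hM : Mfun Frel Grel x y =
        x ^ 4 / 2 * ((deriv Grel y) ^ 2 - 2 * Grel y * deriv (deriv Grel) y) := by
      unfold Mfun
      rw [dF3, dF2, dF]
      simp only [Frel]
      ring
    refine ⟨hM, ?_⟩
    rw [hM]
    have := hnonneg y
    positivity
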